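/- Let δ > 0 and let (x,y,z) ∈ Δ² satisfy δ < min(x,y,z) < 1/3 − 2δ. Then max(|P₁(x,y,z)|, |P₂(x,y,z)|, |P₃(x,y,z)|) > (3/2)δ²; in particular ‖P(x,y,z)‖ is bounded away from 0 on the set {(x,y,z) ∈ Δ² : δ < min(x,y,z) < 1/3 − 2δ}. -/
import Mathlib


open Filter Set Topology

noncomputable section

/-- The rock–paper–scissors vector field `P` on `ℝ³`, with components
`P₁(x,y,z) = x(z-y)/2`, `P₂(x,y,z) = y(x-z)/2`, `P₃(x,y,z) = z(y-x)/2`. -/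
def Pfield : ℝ × ℝ × ℝ → ℝ × ℝ × ℝ :=
  fun p => (p.1 * (p.2.2 - p.2.1) / 2, p.2.1 * (p.1 - p.2.2) / 2, p.2.2 * (p.2.1 - p.1) / 2)

/-- The simplex `Δ² = {(x,y,z) : x,y,z ≥ 0, x+y+z = 1}`. -/
def simplex2 : Set (ℝ × ℝ × ℝ) :=
  {p | 0 ≤ p.1 ∧ 0 ≤ p.2.1 ∧ 0 ≤ p.2.2 ∧ p.1 + p.2.1 + p.2.2 = 1}

lemma rps_key (δ c d : ℝ) (hδ : 0 < δ) (hc : δ < c) (hd : 3*δ < d) :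
    (3/2) * δ^2 < |c * d / 2| := by
  have h : (3/2) * δ^2 < c * d / 2 := by nlinarith
  exact h.trans_le (le_abs_self _)

lemma rps_main (δ : ℝ) (hδ : 0 < δ) :
    ∀ x y z : ℝ, 0 ≤ x → 0 ≤ y → 0 ≤ z → x + y + z = 1 →
      δ < min x (min y z) → min x (min y z) < 1/3 - 2*δ →
      (3/2) * δ^2 < max |x * (z - y) / 2| (max |y * (x - z) / 2| |z * (y - x) / 2|) := by
  intro x y z hx0 hy0 hz0 hsum h1 h2
  have hx : δ < x := lt_of_lt_of_le h1 (min_le_left _ _)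
  have hy : δ < y := lt_of_lt_of_le h1 ((min_le_right _ _).trans (min_le_left _ _))
  have hz : δ < z := lt_of_lt_of_le h1 ((min_le_right _ _).trans (min_le_right _ _))
  rcases min_lt_iff.mp h2 with hs | hs'
  · -- x < 1/3 - 2δ, so (y-x)+(z-x) > 6δ
    by_cases hd : 3*δ < y - x
    · have := rps_key δ z (y - x) hδ hz hd
      exact lt_max_iff.mpr (Or.inr (lt_max_iff.mpr (Or.inr this)))
    · push_neg at hd
      have hd' : 3*δ < z - x := by nlinarith
      have h := rps_key δ y (z - x) hδ hy hd'
      have he : |y * (x - z) / 2| = |y * (z - x) / 2| := by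
        rw [abs_div, abs_div, abs_mul, abs_mul, abs_sub_comm]
      exact lt_max_iff.mpr (Or.inr (lt_max_iff.mpr (Or.inl (he ▸ h))))
  rcases min_lt_iff.mp hs' with hs | hs
  · -- y < 1/3 - 2δ
    by_cases hd : 3*δ < z - y
    · have := rps_key δ x (z - y) hδ hx hd
      exact lt_max_iff.mpr (Or.inl this)
    · push_neg at hd
      have hd' : 3*δ < x - y := by nlinarith
      have h := rps_key δ z (x - y) hδ hz hd'
      have he : |z * (y - x) / 2| = |z * (x - y) / 2| := by
        rw [abs_div, abs_div, abs_mul, abs_mul, abs_sub_comm]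
      exact lt_max_iff.mpr (Or.inr (lt_max_iff.mpr (Or.inr (he ▸ h))))
  · -- z < 1/3 - 2δ
    by_cases hd : 3*δ < x - z
    · have := rps_key δ y (x - z) hδ hy hd
      exact lt_max_iff.mpr (Or.inr (lt_max_iff.mpr (Or.inl this)))
    · push_neg at hd
      have hd' : 3*δ < y - z := by nlinarith
      have h := rps_key δ x (y - z) hδ hx hd'
      have he : |x * (z - y) / 2| = |x * (y - z) / 2| := by
        rw [abs_div, abs_div, abs_mul, abs_mul, abs_sub_comm]
      exact lt_max_iff.mpr (Or.inl (he ▸ h))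

/-- On the part of the simplex where `δ < min(x,y,z) < 1/3 - 2δ`, the largest component of
`P` exceeds `(3/2)δ²`; in particular `‖P‖` is bounded away from `0` there. -/
theorem rps_field_bounded_below (δ : ℝ) (hδ : 0 < δ) :
    (∀ x y z : ℝ, 0 ≤ x → 0 ≤ y → 0 ≤ z → x + y + z = 1 →
      δ < min x (min y z) → min x (min y z) < 1/3 - 2*δ →
      (3/2) * δ^2 < max |x * (z - y) / 2| (max |y * (x - z) / 2| |z * (y - x) / 2|)) ∧
    (∃ ε : ℝ, 0 < ε ∧ ∀ p : ℝ × ℝ × ℝ, p ∈ simplex2 →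
      δ < min p.1 (min p.2.1 p.2.2) → min p.1 (min p.2.1 p.2.2) < 1/3 - 2*δ →
      ε ≤ ‖Pfield p‖) := by
  refine ⟨rps_main δ hδ, (3/2) * δ^2, by positivity, ?_⟩
  intro p hp hm1 hm2
  obtain ⟨hx0, hy0, hz0, hsum⟩ := hp
  have h := rps_main δ hδ p.1 p.2.1 p.2.2 hx0 hy0 hz0 hsum hm1 hm2
  have hnorm : ‖Pfield p‖ =
      max |p.1 * (p.2.2 - p.2.1) / 2| (max |p.2.1 * (p.1 - p.2.2) / 2| |p.2.2 * (p.2.1 - p.1) / 2|) := by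
    simp [Pfield, Prod.norm_def, Real.norm_eq_abs, abs_mul, abs_div]
  rw [hnorm]
  exact h.le
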